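/- Let α₀, α₁ ∈ ℂ. Define T₀ : {(x,y,z,w,q) ∈ ℂ⁵ : z ≠ 0} → ℂ⁵ by T₀(x,y,z,w,q) = (−(xz + 3α₀)z, y/z, 1/z, (w − y/(3z))z, q) and T₁ : {(x,y,z,w,q) ∈ ℂ⁵ : z ≠ 0} → ℂ⁵ by T₁(x,y,z,w,q) = (x + 3zw + (9/2)z²q + (27/8)z⁴, −(yz + 3α₁)z, 1/z, w + 3zq + 3z³, q + (3/2)z²). Then at every point with z ≠ 0 the Jacobian determinant of T₀ equals 1 and the Jacobian determinant of T₁ equals 1; equivalently, the transition functions preserve the 5-form dx ∧ dy ∧ dz ∧ dw ∧ dq. -/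

import Mathlib

set_option maxHeartbeats 1000000

/-- The transition function `T₀` to chart 0 of the symmetric form (11),
on coordinates `(x,y,z,w,q) = (v 0, v 1, v 2, v 3, v 4)`. -/
noncomputable def T0 (a0 : ℂ) (v : Fin 5 → ℂ) : Fin 5 → ℂ :=
  ![-(v 0 * v 2 + 3 * a0) * v 2,
    v 1 / v 2,
    1 / v 2,
    (v 3 - v 1 / (3 * v 2)) * v 2,
    v 4]

/-- The transition function `T₁` to chart 1 of the symmetric form (11). -/
noncomputable def T1 (a1 : ℂ) (v : Fin 5 → ℂ) : Fin 5 → ℂ :=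
  ![v 0 + 3 * v 2 * v 3 + (9/2) * v 2 ^ 2 * v 4 + (27/8) * v 2 ^ 4,
    -(v 1 * v 2 + 3 * a1) * v 2,
    1 / v 2,
    v 3 + 3 * v 2 * v 4 + 3 * v 2 ^ 3,
    v 4 + (3/2) * v 2 ^ 2]

noncomputable def Pr (i : Fin 5) : (Fin 5 → ℂ) →L[ℂ] ℂ := ContinuousLinearMap.proj i

lemma hPr (i : Fin 5) (p : Fin 5 → ℂ) : HasFDerivAt (fun v : Fin 5 → ℂ => v i) (Pr i) p :=
  (Pr i).hasFDerivAt

lemma hInv (p : Fin 5 → ℂ) (hz : p 2 ≠ 0) :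
    HasFDerivAt (fun v : Fin 5 → ℂ => (v 2)⁻¹)
      ((-ContinuousLinearMap.mulLeftRight ℂ ℂ (p 2)⁻¹ (p 2)⁻¹).comp (Pr 2)) p :=
  (hasFDerivAt_inv' hz).comp p (hPr 2 p)

/-- At every point with `z ≠ 0` the Jacobian determinants of the
transition functions `T₀` and `T₁` equal `1`; i.e. they preserve the 5-form
`dx ∧ dy ∧ dz ∧ dw ∧ dq`. -/
theorem stmt12 (a0 a1 : ℂ) :
    (∀ p : Fin 5 → ℂ, p 2 ≠ 0 →
      Matrix.det (Matrix.of fun i j =>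
        fderiv ℂ (fun v : Fin 5 → ℂ => T0 a0 v i) p (Pi.single j 1)) = 1) ∧
    (∀ p : Fin 5 → ℂ, p 2 ≠ 0 →
      Matrix.det (Matrix.of fun i j =>
        fderiv ℂ (fun v : Fin 5 → ℂ => T1 a1 v i) p (Pi.single j 1)) = 1) := by
  constructor
  · intro p hz
    have h0 := ((((hPr 0 p).mul (hPr 2 p)).add_const (3*a0)).neg).mul (hPr 2 p)
    have h1 := (hPr 1 p).mul (hInv p hz)
    have h2 := hInv p hz
    have h3 := ((hPr 3 p).sub ((hPr 1 p).mul ((hInv p hz).mul_const 3⁻¹))).mul (hPr 2 p)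
    have h4 := hPr 4 p
    have E : (Matrix.of fun i j =>
        fderiv ℂ (fun v : Fin 5 → ℂ => T0 a0 v i) p (Pi.single j 1)) =
        Matrix.of ![![-(p 2 * p 2), 0, -(2*p 0*p 2+3*a0), 0, 0],
          ![0, (p 2)⁻¹, -(p 1 * ((p 2 * p 2)⁻¹)), 0, 0],
          ![0, 0, -((p 2 * p 2)⁻¹), 0, 0],
          ![0, -(3⁻¹:ℂ), p 3, p 2, 0],
          ![0, 0, 0, 0, 1]] := by
      ext i j
      fin_cases i
      · show fderiv ℂ (fun v : Fin 5 → ℂ => -(v 0 * v 2 + 3 * a0) * v 2) p (Pi.single j 1) = _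
        erw [h0.fderiv]
        fin_cases j <;> simp [Pr, Pi.single_apply, Matrix.vecHead, Matrix.vecTail] <;> ring
      · show fderiv ℂ (fun v : Fin 5 → ℂ => v 1 / v 2) p (Pi.single j 1) = _
        simp only [div_eq_mul_inv]
        erw [h1.fderiv]
        fin_cases j <;> simp [Pr, Pi.single_apply, Matrix.vecHead, Matrix.vecTail] <;>
          (try field_simp) <;> (try ring)
      · show fderiv ℂ (fun v : Fin 5 → ℂ => 1 / v 2) p (Pi.single j 1) = _
        simp only [one_div]
        erw [h2.fderiv]
        fin_cases j <;> simp [Pr, Pi.single_apply, Matrix.vecHead, Matrix.vecTail] <;>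
          (try field_simp) <;> (try ring)
      · show fderiv ℂ (fun v : Fin 5 → ℂ => (v 3 - v 1 / (3 * v 2)) * v 2) p (Pi.single j 1) = _
        simp only [div_eq_mul_inv, mul_inv_rev]
        erw [h3.fderiv]
        fin_cases j <;> simp [Pr, Pi.single_apply, Matrix.vecHead, Matrix.vecTail] <;>
          (try field_simp) <;> (try ring)
      · show fderiv ℂ (fun v : Fin 5 → ℂ => v 4) p (Pi.single j 1) = _
        erw [h4.fderiv]
        fin_cases j <;> simp [Pr, Pi.single_apply, Matrix.vecHead, Matrix.vecTail]
    rw [E]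
    simp [Matrix.det_succ_row_zero, Fin.sum_univ_succ]
    field_simp
  · intro p hz
    have hA := ((hPr 0 p).add (((hPr 2 p).const_mul (3:ℂ)).mul (hPr 3 p))).add
        ((((hPr 2 p).mul (hPr 2 p)).const_mul ((9:ℂ)/2)).mul (hPr 4 p)) |>.add
        (((((hPr 2 p).mul (hPr 2 p)).mul (hPr 2 p)).mul (hPr 2 p)).const_mul ((27:ℂ)/8))
    have hB := ((((hPr 1 p).mul (hPr 2 p)).add_const (3*a1)).neg).mul (hPr 2 p)
    have hC := hInv p hz
    have hD := ((hPr 3 p).add (((hPr 2 p).const_mul (3:ℂ)).mul (hPr 4 p))).add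
        ((((hPr 2 p).mul (hPr 2 p)).mul (hPr 2 p)).const_mul (3:ℂ))
    have hE' := (hPr 4 p).add (((hPr 2 p).mul (hPr 2 p)).const_mul ((3:ℂ)/2))
    have E : (Matrix.of fun i j =>
        fderiv ℂ (fun v : Fin 5 → ℂ => T1 a1 v i) p (Pi.single j 1)) =
        Matrix.of ![![1, 0, 3*p 3 + 9*(p 2*p 4) + (27/2)*(p 2*p 2*p 2), 3*p 2, (9/2)*(p 2*p 2)],
          ![0, -(p 2*p 2), -(2*p 1*p 2 + 3*a1), 0, 0],
          ![0, 0, -((p 2*p 2)⁻¹), 0, 0],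
          ![0, 0, 3*p 4 + 9*(p 2*p 2), 1, 3*p 2],
          ![0, 0, 3*p 2, 0, 1]] := by
      ext i j
      fin_cases i
      · show fderiv ℂ (fun v : Fin 5 → ℂ =>
            v 0 + 3 * v 2 * v 3 + (9/2) * v 2 ^ 2 * v 4 + (27/8) * v 2 ^ 4) p (Pi.single j 1) = _
        simp only [pow_succ, pow_zero, one_mul]
        erw [hA.fderiv]
        fin_cases j <;> simp [Pr, Pi.single_apply, Matrix.vecHead, Matrix.vecTail] <;>
          (try field_simp) <;> (try ring)
      · show fderiv ℂ (fun v : Fin 5 → ℂ => -(v 1 * v 2 + 3 * a1) * v 2) p (Pi.single j 1) = _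
        erw [hB.fderiv]
        fin_cases j <;> simp [Pr, Pi.single_apply, Matrix.vecHead, Matrix.vecTail] <;>
          (try field_simp) <;> (try ring)
      · show fderiv ℂ (fun v : Fin 5 → ℂ => 1 / v 2) p (Pi.single j 1) = _
        simp only [one_div]
        erw [hC.fderiv]
        fin_cases j <;> simp [Pr, Pi.single_apply, Matrix.vecHead, Matrix.vecTail] <;>
          (try field_simp) <;> (try ring)
      · show fderiv ℂ (fun v : Fin 5 → ℂ => v 3 + 3 * v 2 * v 4 + 3 * v 2 ^ 3) p (Pi.single j 1) = _
        simp only [pow_succ, pow_zero, one_mul]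
        erw [hD.fderiv]
        fin_cases j <;> simp [Pr, Pi.single_apply, Matrix.vecHead, Matrix.vecTail] <;>
          (try field_simp) <;> (try ring)
      · show fderiv ℂ (fun v : Fin 5 → ℂ => v 4 + (3/2) * v 2 ^ 2) p (Pi.single j 1) = _
        simp only [pow_succ, pow_zero, one_mul]
        erw [hE'.fderiv]
        fin_cases j <;> simp [Pr, Pi.single_apply, Matrix.vecHead, Matrix.vecTail] <;>
          (try field_simp) <;> (try ring)
    rw [E]
    simp [Matrix.det_succ_row_zero, Fin.sum_univ_succ]
    field_simp
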